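/- Let V be a finite-dimensional vector space over a field F and let H₁, …, H_k ⊆ V be linear subspaces. Regarding each ⋀^d H_i naturally as a subspace of ⋀^d V, one has ⋂_{1 ≤ i ≤ k} (⋀^d H_i) = ⋀^d (⋂_{1 ≤ i ≤ k} H_i) for every 0 ≤ d ≤ dim V. -/

import Mathlib

open Module ExteriorAlgebra

variable {F : Type*} [Field F] {V : Type*} [AddCommGroup V] [Module F V]
  {V₂ : Type*} [AddCommGroup V₂] [Module F V₂]

/-- A (generalized) reflection: a diagonalizable endomorphism `s` with
`rank (s - id) = 1`. -/
def IsReflection (s : V →ₗ[F] V) : Prop :=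
  (⨆ μ : F, Module.End.eigenspace s μ) = ⊤ ∧
    Module.finrank F (LinearMap.range (s - LinearMap.id)) = 1

theorem extPower_map_mem (d : ℕ) (f : V →ₗ[F] V₂) {x : ExteriorAlgebra F V}
    (hx : x ∈ ⋀[F]^d V) : ExteriorAlgebra.map f x ∈ ⋀[F]^d V₂ := by
  have h : Submodule.map (ExteriorAlgebra.map f).toLinearMap (⋀[F]^d V) ≤ ⋀[F]^d V₂ := by
    rw [exteriorPower, Submodule.map_pow, ι_range_map_map]
    have h1 : Submodule.map (ι F (M := V₂)) (LinearMap.range f)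
        ≤ LinearMap.range (ι F (M := V₂)) := by
      rintro - ⟨y, -, rfl⟩
      exact ⟨y, rfl⟩
    exact pow_le_pow_left' h1 d
  exact h ⟨x, hx, rfl⟩

/-- The linear map induced on `d`-th exterior powers by a linear map; for the inclusion
`H.subtype` of a subspace `H ⊆ V` this realizes `⋀^d H` as a subspace of `⋀^d V`
(via its range). -/
noncomputable def extMap (d : ℕ) (f : V →ₗ[F] V₂) : (⋀[F]^d V) →ₗ[F] (⋀[F]^d V₂) :=
  (ExteriorAlgebra.map f).toLinearMap.restrict (fun _ hx => extPower_map_mem d f hx)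

@[simp] theorem extMap_apply_coe (d : ℕ) (f : V →ₗ[F] V₂) (x : ⋀[F]^d V) :
    (extMap d f x : ExteriorAlgebra F V₂) = ExteriorAlgebra.map f x := rfl

variable {W : Type*} [Group W]

/-- The representation of `W` on the `d`-th exterior power `⋀^d V` induced by a
representation of `W` on `V`, given by `w · (v₁ ∧ ⋯ ∧ v_d) = (w·v₁) ∧ ⋯ ∧ (w·v_d)`. -/
noncomputable def extRep (ρ : Representation F W V) (d : ℕ) :
    Representation F W (⋀[F]^d V) where
  toFun w := extMap d (ρ w)
  map_one' := by
    apply LinearMap.ext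
    intro x
    apply Subtype.ext
    simp only [extMap_apply_coe, map_one]
    show (ExteriorAlgebra.map (LinearMap.id) : _) _ = _
    rw [ExteriorAlgebra.map_id]
    rfl
  map_mul' a b := by
    apply LinearMap.ext
    intro x
    apply Subtype.ext
    simp only [extMap_apply_coe, map_mul]
    show (ExteriorAlgebra.map (ρ a ∘ₗ ρ b) : _) _ = _
    rw [← ExteriorAlgebra.map_comp_map]
    rfl

/-- Irreducibility (simplicity) of a representation: the space is nonzero and the only
invariant subspaces are `⊥` and `⊤`. -/
def Representation.IsIrreducible' (ρ : Representation F W V) : Prop :=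
  Nontrivial V ∧
    ∀ U : Submodule F V, (∀ w : W, ∀ v ∈ U, ρ w v ∈ U) → U = ⊥ ∨ U = ⊤

/-- Isomorphism of two representations of `W`: an equivariant linear equivalence. -/
def Representation.Iso {F W : Type*} [CommSemiring F] [Monoid W]
    {V₁ V₂ : Type*} [AddCommMonoid V₁] [Module F V₁] [AddCommMonoid V₂] [Module F V₂]
    (ρ₁ : Representation F W V₁) (ρ₂ : Representation F W V₂) : Prop :=
  ∃ e : V₁ ≃ₗ[F] V₂, ∀ (w : W) (v : V₁), e (ρ₁ w v) = ρ₂ w (e v)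

/-- The wedge product `v 0 ∧ v 1 ∧ ⋯ ∧ v (d-1)` as an element of `⋀^d V`. -/
noncomputable def wedge (d : ℕ) (v : Fin d → V) : ⋀[F]^d V :=
  ⟨ExteriorAlgebra.ιMulti F d v, ExteriorAlgebra.ιMulti_range F d ⟨v, rfl⟩⟩

/-- Let `V` be a finite-dimensional vector space and `H 1, …, H k ⊆ V`
linear subspaces. Regarding each `⋀^d (H i)` naturally as a subspace of `⋀^d V` (the range
of the map induced by the inclusion `H i ↪ V`), one has
Auxiliary lemmas for Statement 16. -/

private lemma aux_fin_iInf_succ {α : Type*} [CompleteLattice α] {k : ℕ} (f : Fin (k + 1) → α) :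
    ⨅ i, f i = f 0 ⊓ ⨅ i : Fin k, f i.succ := by
  apply le_antisymm
  · exact le_inf (iInf_le _ 0) (le_iInf fun i => iInf_le _ i.succ)
  · refine le_iInf fun i => ?_
    induction i using Fin.cases with
    | zero => exact inf_le_left
    | succ j => exact inf_le_right.trans (iInf_le _ j)

private lemma aux_map_exteriorPower_eq (H : Submodule F V) (d : ℕ) :
    Submodule.map (ExteriorAlgebra.map H.subtype).toLinearMap (⋀[F]^d H) =
      (Submodule.map (ι F) H) ^ d := by
  rw [exteriorPower, Submodule.map_pow, ι_range_map_map, Submodule.range_subtype]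

private lemma aux_epow_le (H : Submodule F V) (d : ℕ) :
    (Submodule.map (ι F) H) ^ d ≤ (⋀[F]^d V : Submodule F (ExteriorAlgebra F V)) := by
  rw [exteriorPower]
  exact pow_le_pow_left' (Submodule.map_le_iff_le_comap.2
    (fun x _ => LinearMap.mem_range_self _ x)) d

private lemma aux_range_extMap (H : Submodule F V) (d : ℕ) :
    LinearMap.range (extMap d H.subtype) =
      Submodule.comap (⋀[F]^d V).subtype ((Submodule.map (ι F) H) ^ d) := by
  ext x
  simp only [LinearMap.mem_range, Submodule.mem_comap, Submodule.coe_subtype]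
  rw [← aux_map_exteriorPower_eq]
  constructor
  · rintro ⟨y, rfl⟩
    exact ⟨(y : ExteriorAlgebra F H), y.2, rfl⟩
  · rintro ⟨y, hy, hyx⟩
    exact ⟨⟨y, hy⟩, Subtype.ext hyx⟩

private lemma aux_exists_isCompl_le {A B : Submodule F V} (h : A ⊓ B = ⊥) :
    ∃ K, B ≤ K ∧ IsCompl A K := by
  obtain ⟨K', hK'⟩ := (A ⊔ B).exists_isCompl
  refine ⟨B ⊔ K', le_sup_left, ?_, ?_⟩
  · rw [disjoint_iff, eq_bot_iff]
    rintro x ⟨hxA, hxBK⟩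
    obtain ⟨b, hb, k, hk, rfl⟩ := Submodule.mem_sup.1 hxBK
    have hkAB : k ∈ A ⊔ B := by
      rw [show k = (b + k) - b from (add_sub_cancel_left b k).symm]
      exact sub_mem (le_sup_left (a := A) hxA)
        (le_sup_right (b := B) hb)
    have hk0 : k = 0 := by
      have := hK'.disjoint.le_bot ⟨hkAB, hk⟩
      simpa using this
    subst hk0
    have : b + 0 ∈ A ⊓ B := ⟨hxA, by simpa using hb⟩
    rw [h] at this
    simpa using this
  · rw [codisjoint_iff, ← sup_assoc]
    exact hK'.codisjoint.eq_top

/-- The core binary case: `⋀^d H₁ ∩ ⋀^d H₂ ≤ ⋀^d (H₁ ⊓ H₂)` inside the exterior algebra. -/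
private lemma aux_inf_pow_le (H₁ H₂ : Submodule F V) (d : ℕ) :
    (Submodule.map (ι F) H₁) ^ d ⊓ (Submodule.map (ι F) H₂) ^ d ≤
      (Submodule.map (ι F) (H₁ ⊓ H₂)) ^ d := by
  set W := H₁ ⊓ H₂ with hW
  obtain ⟨C', hC'⟩ := (W.comap H₁.subtype).exists_isCompl
  set C₁ := C'.map H₁.subtype with hC₁
  have hsup : W ⊔ C₁ = H₁ := by
    have h1 := congrArg (Submodule.map H₁.subtype) hC'.codisjoint.eq_top
    rw [Submodule.map_sup, Submodule.map_comap_subtype, Submodule.map_top,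
      Submodule.range_subtype, inf_eq_right.2 (inf_le_left : W ≤ H₁)] at h1
    exact h1
  have hC₁H₂ : H₂ ⊓ C₁ = ⊥ := by
    rw [eq_bot_iff]
    rintro x ⟨hxH₂, hxC⟩
    obtain ⟨c, hc, rfl⟩ := hxC
    have hcW : c ∈ W.comap H₁.subtype := by
      simp only [Submodule.mem_comap, hW]
      exact ⟨c.2, hxH₂⟩
    have := hC'.disjoint.le_bot (⟨hcW, hc⟩ : c ∈ W.comap H₁.subtype ⊓ C')
    simp only [Submodule.mem_bot] at this
    simp [this]
  obtain ⟨K, hBK, hK⟩ := aux_exists_isCompl_le hC₁H₂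
  set p : V →ₗ[F] V := H₂.subtype ∘ₗ (H₂.projectionOnto K hK) with hp
  have hp2 : ∀ x ∈ H₂, p x = x := by
    intro x hx
    have := Submodule.projectionOnto_apply_left hK ⟨x, hx⟩
    simp only [hp, LinearMap.coe_comp, Function.comp_apply]
    rw [this]
    rfl
  have hpK : ∀ x ∈ K, p x = 0 := by
    intro x hx
    simp only [hp, LinearMap.coe_comp, Function.comp_apply]
    rw [Submodule.projectionOnto_apply_of_mem_right hK hx]
    simp
  have hpH₁ : ∀ x ∈ H₁, p x ∈ W := by
    intro x hx
    rw [← hsup] at hx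
    obtain ⟨w, hw, c, hc, rfl⟩ := Submodule.mem_sup.1 hx
    rw [map_add, hp2 w (inf_le_right (a := H₁) hw), hpK c (hBK hc), add_zero]
    exact hw
  rintro x ⟨hx1, hx2⟩
  have hfix : ExteriorAlgebra.map p x = x := by
    refine Submodule.pow_induction_on_left (M := Submodule.map (ι F) H₂) ?_ ?_ ?_ hx2
    · intro r; rw [AlgHom.commutes]
    · intro a b ha hb; rw [map_add, ha, hb]
    · rintro m ⟨v, hv, rfl⟩ y hy
      rw [map_mul, map_apply_ι, hp2 v hv, hy]
  have hmem : ExteriorAlgebra.map p x ∈ (Submodule.map (ι F) W) ^ d := by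
    have hmap : Submodule.map (ExteriorAlgebra.map p).toLinearMap
        ((Submodule.map (ι F) H₁) ^ d) ≤ (Submodule.map (ι F) W) ^ d := by
      rw [Submodule.map_pow]
      refine pow_le_pow_left' ?_ d
      rintro - ⟨-, ⟨v, hv, rfl⟩, rfl⟩
      exact ⟨p v, hpH₁ v hv, (map_apply_ι p v).symm⟩
    exact hmap ⟨x, hx1, rfl⟩
  rwa [hfix] at hmem

private lemma aux_master (d : ℕ) :
    ∀ (k : ℕ) (H : Fin k → Submodule F V),
      (⨅ i, (Submodule.map (ι F) (H i)) ^ d) ⊓ (⋀[F]^d V : Submodule F (ExteriorAlgebra F V)) =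
        (Submodule.map (ι F) (⨅ i, H i)) ^ d
  | 0, H => by
    rw [iInf_of_empty, iInf_of_empty, top_inf_eq, Submodule.map_top, exteriorPower]
  | (k + 1), H => by
    rw [aux_fin_iInf_succ (fun i => (Submodule.map (ι F) (H i)) ^ d),
      aux_fin_iInf_succ H, inf_assoc, aux_master d k (fun i => H i.succ)]
    refine le_antisymm (aux_inf_pow_le _ _ d) (le_inf ?_ ?_)
    · exact pow_le_pow_left' (Submodule.map_mono inf_le_left) d
    · exact pow_le_pow_left' (Submodule.map_mono inf_le_right) d

/-- Let `V` be a finite-dimensional vector space and `H 1, …, H k ⊆ V`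
linear subspaces. Regarding each `⋀^d (H i)` naturally as a subspace of `⋀^d V` (the range
of the map induced by the inclusion `H i ↪ V`), one has
`⋂_{1 ≤ i ≤ k} ⋀^d (H i) = ⋀^d (⋂_{1 ≤ i ≤ k} H i)` for every `0 ≤ d ≤ dim V`. -/
theorem iInf_exteriorPower_eq_exteriorPower_iInf
    [FiniteDimensional F V] {k : ℕ} (H : Fin k → Submodule F V) :
    ∀ d : ℕ, d ≤ Module.finrank F V →
      (⨅ i : Fin k, LinearMap.range (extMap d (H i).subtype)) =
        LinearMap.range (extMap d (⨅ i : Fin k, H i).subtype) := by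
  intro d _
  simp_rw [aux_range_extMap]
  have hcomap : (⨅ i : Fin k, Submodule.comap (⋀[F]^d V).subtype
      ((Submodule.map (ι F) (H i)) ^ d)) =
      Submodule.comap (⋀[F]^d V).subtype (⨅ i : Fin k, (Submodule.map (ι F) (H i)) ^ d) := by
    ext x
    simp [Submodule.mem_iInf]
  rw [hcomap, ← aux_master d k H, Submodule.comap_inf]
  have htop : Submodule.comap (⋀[F]^d V).subtype
      (⋀[F]^d V : Submodule F (ExteriorAlgebra F V)) = ⊤ := by
    rw [eq_top_iff]
    exact fun x _ => x.2
  rw [htop, inf_top_eq]
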